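/- Assume w_I > 0, Γ_l < 0 with Γ_l ≤ Γ_j and Γ_l ≤ Γ̃_j for all j, Ω̃ ≥ ω̃_j for all j with Ω̃ > 0, and let T satisfy 0 ≤ T ≤ π/(2Ω̃). Set C_II = ∑_{j=1}^K r_j, C_III(T) = 2∑_{j=1}^L r̃_j cos(ω̃_j T), assume C_II + C_III(T) > 0, and define τ_CB(T) = (1/|Γ_l|) · ln((C_II + C_III(T)) / w_I). If t_CB ≥ 0 and w(t_CB) ≥ 0, then t_CB ≥ min{T, τ_CB(T)}. -/

import Mathlib

open scoped BigOperators

/-- **General bound for good configurations, min form.**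
With `τ_CB(T) = (1/|Γ_l|)·ln((C_II + C_III(T))/w_I)`: if `t_CB ≥ 0` and
`w(t_CB) ≥ 0`, then `t_CB ≥ min{T, τ_CB(T)}`. -/
theorem good_configuration_min_bound (K L : ℕ)
    (wI : ℝ) (r Γ : Fin K → ℝ) (rt Γt ωt : Fin L → ℝ)
    (hr : ∀ j, 0 ≤ r j) (hrt : ∀ j, 0 ≤ rt j)
    (hΓ : ∀ j, Γ j ≤ 0) (hΓt : ∀ j, Γt j ≤ 0) (hωt : ∀ j, 0 ≤ ωt j)
    (w : ℝ → ℝ)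
    (hw : ∀ t, w t = wI - (∑ j, r j * Real.exp (Γ j * t))
        - 2 * ∑ j, rt j * Real.exp (Γt j * t) * Real.cos (ωt j * t))
    (hwI : 0 < wI)
    (Γl : ℝ) (hΓlneg : Γl < 0) (hΓl : ∀ j, Γl ≤ Γ j) (hΓlt : ∀ j, Γl ≤ Γt j)
    (Ω : ℝ) (hΩ : ∀ j, ωt j ≤ Ω) (hΩpos : 0 < Ω)
    (T : ℝ) (hT0 : 0 ≤ T) (hT : T ≤ Real.pi / (2 * Ω))
    (hC : 0 < (∑ j, r j) + 2 * ∑ j, rt j * Real.cos (ωt j * T))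
    (τCB : ℝ)
    (hτ : τCB = (1 / |Γl|) *
        Real.log (((∑ j, r j) + 2 * ∑ j, rt j * Real.cos (ωt j * T)) / wI))
    (tCB : ℝ) (htCB0 : 0 ≤ tCB) (hwtCB : 0 ≤ w tCB) :
    min T τCB ≤ tCB := by
  by_contra h
  push_neg at h
  have htT : tCB < T := lt_of_lt_of_le h (min_le_left _ _)
  have htτ : tCB < τCB := lt_of_lt_of_le h (min_le_right _ _)
  set C : ℝ := (∑ j, r j) + 2 * ∑ j, rt j * Real.cos (ωt j * T) with hCdef
  clear_value C
  -- Ω * T ≤ π / 2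
  have hΩT : Ω * T ≤ Real.pi / 2 := by
    have := mul_le_mul_of_nonneg_left hT (le_of_lt hΩpos)
    calc Ω * T ≤ Ω * (Real.pi / (2 * Ω)) := this
      _ = Real.pi / 2 := by field_simp
  -- bounds on cosine arguments
  have hcosT : ∀ j, 0 ≤ Real.cos (ωt j * T) := by
    intro j
    apply Real.cos_nonneg_of_mem_Icc
    constructor
    · have := mul_nonneg (hωt j) hT0
      have := Real.pi_pos
      linarith
    · exact le_trans (mul_le_mul_of_nonneg_right (hΩ j) hT0) hΩT
  have hcos : ∀ j, Real.cos (ωt j * T) ≤ Real.cos (ωt j * tCB) := by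
    intro j
    apply Real.cos_le_cos_of_nonneg_of_le_pi
    · exact mul_nonneg (hωt j) htCB0
    · have : ωt j * T ≤ Real.pi / 2 :=
        le_trans (mul_le_mul_of_nonneg_right (hΩ j) hT0) hΩT
      linarith [Real.pi_pos]
    · exact mul_le_mul_of_nonneg_left (le_of_lt htT) (hωt j)
  have hexpΓ : ∀ j, Real.exp (Γl * tCB) ≤ Real.exp (Γ j * tCB) := fun j =>
    Real.exp_le_exp.mpr (mul_le_mul_of_nonneg_right (hΓl j) htCB0)
  have hexpΓt : ∀ j, Real.exp (Γl * tCB) ≤ Real.exp (Γt j * tCB) := fun j =>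
    Real.exp_le_exp.mpr (mul_le_mul_of_nonneg_right (hΓlt j) htCB0)
  -- sum bounds
  have hsum1 : (∑ j, r j * Real.exp (Γl * tCB)) ≤ ∑ j, r j * Real.exp (Γ j * tCB) :=
    Finset.sum_le_sum (fun j _ => mul_le_mul_of_nonneg_left (hexpΓ j) (hr j))
  have hsum2 : (∑ j, rt j * Real.exp (Γl * tCB) * Real.cos (ωt j * T)) ≤
      ∑ j, rt j * Real.exp (Γt j * tCB) * Real.cos (ωt j * tCB) := by
    apply Finset.sum_le_sum
    intro j _
    apply mul_le_mul
    · exact mul_le_mul_of_nonneg_left (hexpΓt j) (hrt j)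
    · exact hcos j
    · exact hcosT j
    · exact mul_nonneg (hrt j) (Real.exp_pos _).le
  have hwle : w tCB ≤ wI - Real.exp (Γl * tCB) * C := by
    rw [hw tCB, hCdef]
    have h2 : 2 * (∑ j, rt j * Real.exp (Γl * tCB) * Real.cos (ωt j * T)) ≤
        2 * ∑ j, rt j * Real.exp (Γt j * tCB) * Real.cos (ωt j * tCB) := by linarith
    have e1 : Real.exp (Γl * tCB) * ((∑ j, r j) + 2 * ∑ j, rt j * Real.cos (ωt j * T))
        = (∑ j, r j * Real.exp (Γl * tCB))
          + 2 * ∑ j, rt j * Real.exp (Γl * tCB) * Real.cos (ωt j * T) := by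
      rw [mul_add]
      congr 1
      · rw [Finset.mul_sum]; exact Finset.sum_congr rfl fun j _ => mul_comm _ _
      · rw [mul_left_comm]
        congr 1
        rw [Finset.mul_sum]
        exact Finset.sum_congr rfl fun j _ => by ring
    linarith
  -- exp(Γl τ) = wI / C
  have habs : |Γl| = -Γl := abs_of_neg hΓlneg
  have hCw : 0 < C / wI := div_pos hC hwI
  have hexpτ : Real.exp (Γl * τCB) = wI / C := by
    have hne : Γl ≠ 0 := ne_of_lt hΓlneg
    have : Γl * τCB = - Real.log (C / wI) := by
      rw [hτ, habs]
      field_simp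
    rw [this, Real.exp_neg, Real.exp_log hCw, inv_div]
  have hstrict : Real.exp (Γl * τCB) < Real.exp (Γl * tCB) :=
    Real.exp_lt_exp.mpr (by nlinarith)
  rw [hexpτ] at hstrict
  have h3 : wI / C * C < Real.exp (Γl * tCB) * C := mul_lt_mul_of_pos_right hstrict hC
  have h4 : wI / C * C = wI := div_mul_cancel₀ wI (ne_of_gt hC)
  linarith
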